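/- arXiv:2211.01280 — 4 statements merged into one kernel-verified Lean document; each statement's English description precedes it below -/
import Mathlib

section
/- For any points x, x', x* in a real inner product space E, one has | ‖x'−x*‖³ − ‖x−x*‖³ − 3⟨x'−x, x'−x*⟩‖x'−x*‖ | ≤ 6‖x'−x‖²‖x'−x*‖ + 3‖x'−x‖³. -/
open scoped RealInnerProductSpace

/-- First-order Taylor expansion of `y ↦ ‖y − x*‖³` centered at `x'`, with an
explicit Lagrange-type remainder bound. -/
theorem norm_cube_taylor_remainder
    {E : Type*} [NormedAddCommGroup E] [InnerProductSpace ℝ E]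
    (x x' xstar : E) :
    |‖x' - xstar‖ ^ 3 - ‖x - xstar‖ ^ 3
        - 3 * ⟪x' - x, x' - xstar⟫ * ‖x' - xstar‖|
      ≤ 6 * ‖x' - x‖ ^ 2 * ‖x' - xstar‖ + 3 * ‖x' - x‖ ^ 3 := by
  set a := ‖x' - xstar‖ with ha
  set b := ‖x - xstar‖ with hb
  set t := ‖x' - x‖ with ht
  have hp : ⟪x' - x, x' - xstar⟫ = (a^2 - b^2 + t^2)/2 := by
    have h := norm_sub_sq_real (x' - xstar) (x' - x)
    rw [show x' - xstar - (x' - x) = x - xstar by abel, real_inner_comm] at h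
    rw [← ha, ← hb, ← ht] at h
    linarith
  rw [hp]
  have h1 : |a - b| ≤ t := by
    have h := abs_norm_sub_norm_le (x' - xstar) (x - xstar)
    rw [show x' - xstar - (x - xstar) = x' - x by abel] at h
    exact h
  obtain ⟨h2, h3⟩ := abs_le.mp h1
  have ha0 : 0 ≤ a := norm_nonneg _
  have hb0 : 0 ≤ b := norm_nonneg _
  have ht0 : 0 ≤ t := norm_nonneg _
  rw [abs_le]
  constructor <;>
    nlinarith [mul_nonneg (mul_nonneg (by linarith : (0:ℝ) ≤ t - (a-b)) (by linarith : (0:ℝ) ≤ t + (a-b))) (by linarith : (0:ℝ) ≤ a + 2*b),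
      mul_nonneg (mul_nonneg ht0 ht0) (by linarith : (0:ℝ) ≤ a + t - b),
      mul_nonneg ha0 (mul_nonneg ht0 ht0), mul_nonneg ht0 (mul_nonneg ht0 ht0),
      mul_nonneg ha0 (sq_nonneg (a-b)), mul_nonneg hb0 (sq_nonneg (a-b))]
end

section
/- Let a_1, …, a_n > 0 with Σ_i a_i = 1, let c_1, …, c_n be real numbers, set Z = Σ_j a_j e^{−c_j} and a'_i = a_i e^{−c_i}/Z. Let φ_1, …, φ_n ≥ 0 and φ'_1, …, φ'_n ≥ 0 be weights, set ā = Σ_i φ_i a_i, ā' = Σ_i φ'_i a'_i, and u_i = φ'_i a'_i / ā'. Suppose m > 0 satisfies ā ≥ m and Σ_i φ'_i a_i ≥ m, and ā' > 0. Then | Σ_i u_i log( (a'_i/ā') / (a_i/ā) ) | ≤ (1/m)·| Σ_i (φ'_i − φ_i) a_i | + Σ_i u_i (e^{c_i} − 1 − c_i). -/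
open Finset Real

lemma log_sub_le_abs_div_aux {m x y : ℝ} (hm : 0 < m) (hx : m ≤ x) (hy : m ≤ y) :
    Real.log x - Real.log y ≤ |x - y| / m := by
  have hx0 : 0 < x := hm.trans_le hx
  have hy0 : 0 < y := hm.trans_le hy
  rw [← Real.log_div hx0.ne' hy0.ne']
  have h2 : Real.log (x / y) ≤ x / y - 1 := Real.log_le_sub_one_of_pos (by positivity)
  have h3 : x / y - 1 = (x - y) / y := by field_simp
  rcases le_total y x with h | h
  · have h4 : (x - y) / y ≤ (x - y) / m := by gcongr
    have h5 : |x - y| = x - y := abs_of_nonneg (by linarith)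
    rw [h5]; linarith
  · have h4 : (x - y) / y ≤ 0 := div_nonpos_of_nonpos_of_nonneg (by linarith) hy0.le
    have h5 : 0 ≤ |x - y| / m := by positivity
    linarith

lemma abs_log_sub_le_abs_div {m x y : ℝ} (hm : 0 < m) (hx : m ≤ x) (hy : m ≤ y) :
    |Real.log x - Real.log y| ≤ |x - y| / m := by
  rw [abs_sub_le_iff]
  refine ⟨log_sub_le_abs_div_aux hm hx hy, ?_⟩
  rw [abs_sub_comm]
  exact log_sub_le_abs_div_aux hm hy hx

/-- Bound on the weighted relative-entropy-type sum for the normalized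
multiplicative-weights update `a'ᵢ = aᵢ e^{−cᵢ}/Z`, in terms of the change of the
localization weights and the second-order exponential remainder. -/
theorem mw_relative_entropy_bound
    {n : ℕ} (a c φ φ' : Fin n → ℝ)
    (ha : ∀ i, 0 < a i) (hsum : ∑ i, a i = 1)
    (Z : ℝ) (hZ : Z = ∑ j, a j * Real.exp (-c j))
    (a' : Fin n → ℝ) (ha' : ∀ i, a' i = a i * Real.exp (-c i) / Z)
    (hφ : ∀ i, 0 ≤ φ i) (hφ' : ∀ i, 0 ≤ φ' i)
    (abar abar' : ℝ)
    (habar_def : abar = ∑ i, φ i * a i) (habar'_def : abar' = ∑ i, φ' i * a' i)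
    (u : Fin n → ℝ) (hu : ∀ i, u i = φ' i * a' i / abar')
    (m : ℝ) (hm : 0 < m) (habar_ge : m ≤ abar) (hφ'a_ge : m ≤ ∑ i, φ' i * a i)
    (habar' : 0 < abar') :
    |∑ i, u i * Real.log ((a' i / abar') / (a i / abar))|
      ≤ (1 / m) * |∑ i, (φ' i - φ i) * a i|
        + ∑ i, u i * (Real.exp (c i) - 1 - c i) := by
  -- nonemptiness
  rcases Nat.eq_zero_or_pos n with hn | hn
  · subst hn
    simp at habar'_def
    linarith
  have hne : (univ : Finset (Fin n)).Nonempty := by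
    haveI : NeZero n := ⟨hn.ne'⟩
    exact univ_nonempty
  have hZpos : 0 < Z := by
    rw [hZ]
    exact Finset.sum_pos (fun i _ => mul_pos (ha i) (Real.exp_pos _)) hne
  have ha'pos : ∀ i, 0 < a' i := fun i => by rw [ha' i]; exact div_pos (mul_pos (ha i) (Real.exp_pos _)) hZpos
  have hupos : ∀ i, 0 ≤ u i := fun i => by
    rw [hu i]
    exact div_nonneg (mul_nonneg (hφ' i) (ha'pos i).le) habar'.le
  set A : ℝ := ∑ i, φ' i * a i with hA
  set B : ℝ := ∑ i, φ' i * (a i * Real.exp (-c i)) with hB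
  have hApos : 0 < A := hm.trans_le hφ'a_ge
  have hBZ : B = Z * abar' := by
    rw [habar'_def, Finset.mul_sum, hB]
    refine Finset.sum_congr rfl fun i _ => ?_
    rw [ha' i]
    field_simp
  have hBpos : 0 < B := by rw [hBZ]; positivity
  have habarpos : 0 < abar := hm.trans_le habar_ge
  -- sum of u is 1
  have husum : ∑ i, u i = 1 := by
    have : ∑ i, u i = (∑ i, φ' i * a' i) / abar' := by
      rw [Finset.sum_div]; exact Finset.sum_congr rfl fun i _ => hu i
    rw [this, ← habar'_def, div_self habar'.ne']
  -- sum of u * exp c = A / B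
  have hE : ∑ i, u i * Real.exp (c i) = A / B := by
    have key : ∀ i, u i * Real.exp (c i) = φ' i * a i / B := by
      intro i
      rw [hu i, ha' i, hBZ]
      have hx : Real.exp (-c i) * Real.exp (c i) = 1 := by
        rw [← Real.exp_add, neg_add_cancel, Real.exp_zero]
      calc φ' i * (a i * Real.exp (-c i) / Z) / abar' * Real.exp (c i)
          = φ' i * a i * (Real.exp (-c i) * Real.exp (c i)) / (Z * abar') := by ring
        _ = φ' i * a i / (Z * abar') := by rw [hx, mul_one]
    rw [Finset.sum_congr rfl fun i _ => key i, ← Finset.sum_div]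
  -- pointwise log decomposition
  have hlog : ∀ i, Real.log ((a' i / abar') / (a i / abar))
      = Real.log abar - Real.log B - c i := by
    intro i
    have hai : a i ≠ 0 := (ha i).ne'
    have hZn : Z ≠ 0 := hZpos.ne'
    have habn : abar ≠ 0 := habarpos.ne'
    have hab'n : abar' ≠ 0 := habar'.ne'
    have h1 : (a' i / abar') / (a i / abar) = Real.exp (-c i) / Z * (abar / abar') := by
      rw [ha' i]
      field_simp
    rw [h1, Real.log_mul (by positivity) (by positivity),
      Real.log_div (Real.exp_pos _).ne' hZpos.ne',
      Real.log_div habarpos.ne' habar'.ne', Real.log_exp, hBZ,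
      Real.log_mul hZpos.ne' habar'.ne']
    ring
  have hS : ∑ i, u i * Real.log ((a' i / abar') / (a i / abar))
      = (Real.log abar - Real.log B) - ∑ i, u i * c i := by
    have h1 : ∑ i, u i * Real.log ((a' i / abar') / (a i / abar))
        = ∑ i, ((Real.log abar - Real.log B) * u i - u i * c i) := by
      refine Finset.sum_congr rfl fun i _ => ?_
      rw [hlog i]; ring
    rw [h1, Finset.sum_sub_distrib, ← Finset.mul_sum, husum, mul_one]
  -- Jensen lower bound : ∑ u c ≤ log (A/B)
  have hlogAB : Real.log (A / B) = Real.log A - Real.log B :=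
    Real.log_div hApos.ne' hBpos.ne'
  have hJensen : ∑ i, u i * c i ≤ Real.log (A / B) := by
    have key : ∀ i, u i * c i ≤ Real.log (A / B) * u i + (B / A) * (u i * Real.exp (c i)) - u i := by
      intro i
      have h1 : Real.log (Real.exp (c i) * (B / A)) ≤ Real.exp (c i) * (B / A) - 1 :=
        Real.log_le_sub_one_of_pos (by positivity)
      rw [Real.log_mul (Real.exp_pos _).ne' (by positivity), Real.log_exp,
        Real.log_div hBpos.ne' hApos.ne'] at h1
      have h2 : c i ≤ Real.log (A / B) + (Real.exp (c i) * (B / A) - 1) := by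
        rw [hlogAB]; linarith
      have h3 := mul_le_mul_of_nonneg_left h2 (hupos i)
      calc u i * c i ≤ u i * (Real.log (A / B) + (Real.exp (c i) * (B / A) - 1)) := h3
        _ = Real.log (A / B) * u i + (B / A) * (u i * Real.exp (c i)) - u i := by ring
    calc ∑ i, u i * c i
        ≤ ∑ i, (Real.log (A / B) * u i + (B / A) * (u i * Real.exp (c i)) - u i) :=
          Finset.sum_le_sum fun i _ => key i
      _ = Real.log (A / B) * (∑ i, u i) + (B / A) * (∑ i, u i * Real.exp (c i))
            - ∑ i, u i := by
          rw [Finset.sum_sub_distrib, Finset.sum_add_distrib, ← Finset.mul_sum,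
            ← Finset.mul_sum]
      _ = Real.log (A / B) := by
          rw [husum, hE]
          field_simp
          ring
  -- upper bound : log (A/B) ≤ ∑ u (e^c - 1)
  have hupper : Real.log (A / B) ≤ ∑ i, u i * (Real.exp (c i) - 1) := by
    have h1 : Real.log (A / B) ≤ A / B - 1 := Real.log_le_sub_one_of_pos (by positivity)
    have h2 : ∑ i, u i * (Real.exp (c i) - 1) = A / B - 1 := by
      have h3 : ∑ i, u i * (Real.exp (c i) - 1)
          = ∑ i, (u i * Real.exp (c i) - u i) :=
        Finset.sum_congr rfl fun i _ => by ring
      rw [h3, Finset.sum_sub_distrib, hE, husum]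
    linarith
  -- combine
  set T : ℝ := Real.log (A / B) - ∑ i, u i * c i with hT
  have hT0 : 0 ≤ T := by rw [hT]; linarith
  have hTle : T ≤ ∑ i, u i * (Real.exp (c i) - 1 - c i) := by
    have h1 : ∑ i, u i * (Real.exp (c i) - 1 - c i)
        = ∑ i, (u i * (Real.exp (c i) - 1) - u i * c i) :=
      Finset.sum_congr rfl fun i _ => by ring
    rw [h1, Finset.sum_sub_distrib, hT]
    have := hupper
    linarith
  have hfirst : |Real.log abar - Real.log A| ≤ |∑ i, (φ' i - φ i) * a i| / m := by
    have h1 : |abar - A| = |∑ i, (φ' i - φ i) * a i| := by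
      rw [← abs_neg, neg_sub, habar_def, hA, ← Finset.sum_sub_distrib]
      exact congrArg abs (Finset.sum_congr rfl fun i _ => by ring)
    rw [← h1]
    exact abs_log_sub_le_abs_div hm habar_ge hφ'a_ge
  have hsplit : ∑ i, u i * Real.log ((a' i / abar') / (a i / abar))
      = (Real.log abar - Real.log A) + T := by
    rw [hS, hT, hlogAB]; ring
  rw [hsplit]
  calc |(Real.log abar - Real.log A) + T| ≤ |Real.log abar - Real.log A| + |T| :=
        abs_add_le _ _
    _ ≤ |∑ i, (φ' i - φ i) * a i| / m + T := by
        rw [abs_of_nonneg hT0]; exact add_le_add_left hfirst _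
    _ ≤ (1 / m) * |∑ i, (φ' i - φ i) * a i| + ∑ i, u i * (Real.exp (c i) - 1 - c i) := by
        rw [one_div, ← div_eq_inv_mul]
        exact add_le_add_right hTle _
end

section
/- Let E be a finite-dimensional real inner product space and F : E → ℝ a three-times continuously differentiable function whose third derivative satisfies ‖D³F(x)‖ ≤ L for all x, where L > 0. Suppose x* ∈ E satisfies DF(x*) = 0 and the Hessian at x* satisfies D²F(x*)(h, h) ≥ σ‖h‖² for all h ∈ E, where σ > 0. Then for every x with ‖x − x*‖ ≤ σ/(2L), one has F(x) ≥ F(x*) + (σ/4)‖x − x*‖². -/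
set_option maxHeartbeats 1000000


open scoped RealInnerProductSpace

/-- Helper: a real function with everywhere derivative nonneg on `[0,1]` satisfies
`p 0 ≤ p 1`. -/
lemma aux_mono_01 {p p' : ℝ → ℝ} (hp : ∀ t, HasDerivAt p (p' t) t)
    (hnn : ∀ t ∈ Set.Icc (0:ℝ) 1, 0 ≤ p' t) : p 0 ≤ p 1 := by
  have hmono : MonotoneOn p (Set.Icc (0:ℝ) 1) := by
    apply monotoneOn_of_deriv_nonneg (convex_Icc 0 1)
    · exact fun t _ => ((hp t).differentiableAt).continuousAt.continuousWithinAt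
    · exact fun t _ => ((hp t).differentiableAt).differentiableWithinAt
    · intro t ht
      rw [(hp t).deriv]
      exact hnn t (interior_subset ht)
  exact hmono (by norm_num) (by norm_num) (by norm_num)

/-- If `F` is `C³` with third derivative bounded by `L`, has a critical point `x*`
whose Hessian is `σ`-positive definite, then `F` grows at least quadratically,
with constant `σ/4`, on the ball of radius `σ/(2L)` around `x*`. -/
theorem quadratic_growth_near_nondegenerate_min
    {E : Type*} [NormedAddCommGroup E] [InnerProductSpace ℝ E]
    [FiniteDimensional ℝ E]
    (F : E → ℝ) (hF : ContDiff ℝ 3 F)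
    (L : ℝ) (hL : 0 < L)
    (hDF3 : ∀ x : E, ‖iteratedFDeriv ℝ 3 F x‖ ≤ L)
    (xstar : E) (hcrit : fderiv ℝ F xstar = 0)
    (σ : ℝ) (hσ : 0 < σ)
    (hhess : ∀ h : E, σ * ‖h‖ ^ 2 ≤ iteratedFDeriv ℝ 2 F xstar ![h, h]) :
    ∀ x : E, ‖x - xstar‖ ≤ σ / (2 * L) →
      F x ≥ F xstar + (σ / 4) * ‖x - xstar‖ ^ 2 := by
  intro x hx
  set h : E := x - xstar with hh
  -- basic differentiability facts
  have hF1 : Differentiable ℝ F := hF.differentiable (by norm_num)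
  have hF2 : ContDiff ℝ 2 (fderiv ℝ F) := hF.fderiv_right (by norm_num)
  have hF2d : Differentiable ℝ (fderiv ℝ F) := hF2.differentiable (by norm_num)
  -- the Hessian map is Lipschitz with constant L
  have hB : ∀ y : E, ‖iteratedFDeriv ℝ 2 F y - iteratedFDeriv ℝ 2 F xstar‖ ≤ L * ‖y - xstar‖ := by
    intro y
    have hdiff : ∀ z : E, z ∈ (Set.univ : Set E) →
        DifferentiableAt ℝ (iteratedFDeriv ℝ 2 F) z := fun z _ =>
      (hF.differentiable_iteratedFDeriv (by norm_num)).differentiableAt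
    have hbound : ∀ z : E, z ∈ (Set.univ : Set E) →
        ‖fderiv ℝ (iteratedFDeriv ℝ 2 F) z‖ ≤ L := by
      intro z _
      rw [norm_fderiv_iteratedFDeriv]
      exact hDF3 z
    exact (convex_univ.norm_image_sub_le_of_norm_fderiv_le hdiff hbound
      (Set.mem_univ xstar) (Set.mem_univ y))
  -- the curve γ t = xstar + t • h
  set γ : ℝ → E := fun t => xstar + t • h with hγ
  have hγd : ∀ t : ℝ, HasDerivAt γ h t := by
    intro t
    have : HasDerivAt (fun s : ℝ => s • h) ((1:ℝ) • h) t := (hasDerivAt_id t).smul_const h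
    have h2 := this.const_add xstar
    simp only [one_smul] at h2
    exact h2
  -- first derivative along the curve
  have hg1 : ∀ t : ℝ, HasDerivAt (fun s => F (γ s)) (fderiv ℝ F (γ t) h) t := by
    intro t
    exact ((hF1 (γ t)).hasFDerivAt).comp_hasDerivAt t (hγd t)
  -- second derivative along the curve
  have hg2 : ∀ t : ℝ, HasDerivAt (fun s => fderiv ℝ F (γ s) h)
      (iteratedFDeriv ℝ 2 F (γ t) ![h, h]) t := by
    intro t
    have h1 : HasDerivAt (fun s => fderiv ℝ F (γ s)) (fderiv ℝ (fderiv ℝ F) (γ t) h) t :=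
      ((hF2d (γ t)).hasFDerivAt).comp_hasDerivAt t (hγd t)
    have h2 := h1.clm_apply (hasDerivAt_const t h)
    simp only [map_zero, add_zero] at h2
    rw [iteratedFDeriv_two_apply]
    simpa using h2
  -- norm bounds
  have hLh : L * ‖h‖ ≤ σ / 2 := by
    have : ‖h‖ ≤ σ / (2 * L) := hx
    calc L * ‖h‖ ≤ L * (σ / (2 * L)) := by nlinarith
      _ = σ / 2 := by field_simp
  -- lower bound for the second derivative along the curve, for t ∈ [0,1]
  have hkey : ∀ t ∈ Set.Icc (0:ℝ) 1, σ / 2 * ‖h‖ ^ 2 ≤ iteratedFDeriv ℝ 2 F (γ t) ![h, h] := by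
    intro t ht
    have hdist : ‖γ t - xstar‖ = |t| * ‖h‖ := by
      simp [hγ, norm_smul, Real.norm_eq_abs]
    have hdiffbd : |iteratedFDeriv ℝ 2 F (γ t) ![h, h] - iteratedFDeriv ℝ 2 F xstar ![h, h]|
        ≤ L * (|t| * ‖h‖) * (‖h‖ * ‖h‖) := by
      have : iteratedFDeriv ℝ 2 F (γ t) ![h, h] - iteratedFDeriv ℝ 2 F xstar ![h, h]
          = (iteratedFDeriv ℝ 2 F (γ t) - iteratedFDeriv ℝ 2 F xstar) ![h, h] := by
        simp [ContinuousMultilinearMap.sub_apply]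
      rw [this]
      calc |(iteratedFDeriv ℝ 2 F (γ t) - iteratedFDeriv ℝ 2 F xstar) ![h, h]|
          ≤ ‖iteratedFDeriv ℝ 2 F (γ t) - iteratedFDeriv ℝ 2 F xstar‖ * ∏ i, ‖(![h, h]) i‖ :=
            (iteratedFDeriv ℝ 2 F (γ t) - iteratedFDeriv ℝ 2 F xstar).le_opNorm ![h, h]
        _ ≤ L * (|t| * ‖h‖) * (‖h‖ * ‖h‖) := by
            rw [Fin.prod_univ_two]
            have h1 := hB (γ t)
            rw [hdist] at h1
            have h2 : (0:ℝ) ≤ ‖h‖ * ‖h‖ := mul_nonneg (norm_nonneg _) (norm_nonneg _)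
            have h3 : (0:ℝ) ≤ ‖iteratedFDeriv ℝ 2 F (γ t) - iteratedFDeriv ℝ 2 F xstar‖ :=
              norm_nonneg _
            simp only [Matrix.cons_val_zero, Matrix.cons_val_one, Matrix.head_cons]
            nlinarith
    have habs : |t| ≤ 1 := by
      rw [abs_le]; constructor <;> [linarith [ht.1]; linarith [ht.2]]
    have hb : L * (|t| * ‖h‖) * (‖h‖ * ‖h‖) ≤ σ / 2 * ‖h‖ ^ 2 := by
      have h0 : 0 ≤ ‖h‖ := norm_nonneg _
      have h1 : L * (|t| * ‖h‖) ≤ σ / 2 := by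
        have : L * (|t| * ‖h‖) ≤ L * ‖h‖ := by nlinarith [mul_nonneg hL.le h0]
        linarith
      nlinarith
    have hmain := hhess h
    have := abs_le.1 hdiffbd
    linarith [this.1]
  -- first step: the function q t = DF(γ t) h - (σ/2) ‖h‖² t is monotone, hence nonneg on [0,1]
  have hQ : ∀ s : ℝ, HasDerivAt (fun s => fderiv ℝ F (γ s) h - σ / 2 * ‖h‖ ^ 2 * s)
      (iteratedFDeriv ℝ 2 F (γ s) ![h, h] - σ / 2 * ‖h‖ ^ 2) s := by
    intro s
    have := (hg2 s).sub ((hasDerivAt_id s).const_mul (σ / 2 * ‖h‖ ^ 2))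
    simp only [mul_one] at this
    exact this
  have hq : ∀ t ∈ Set.Icc (0:ℝ) 1, 0 ≤ fderiv ℝ F (γ t) h - σ / 2 * ‖h‖ ^ 2 * t := by
    intro t ht
    have q0 : fderiv ℝ F (γ 0) h = 0 := by
      simp [hγ, hcrit]
    have hmono : MonotoneOn (fun s => fderiv ℝ F (γ s) h - σ / 2 * ‖h‖ ^ 2 * s)
        (Set.Icc (0:ℝ) 1) := by
      apply monotoneOn_of_deriv_nonneg (convex_Icc 0 1)
      · exact fun s _ => ((hQ s).differentiableAt).continuousAt.continuousWithinAt
      · exact fun s _ => ((hQ s).differentiableAt).differentiableWithinAt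
      · intro s hs
        rw [(hQ s).deriv]
        have := hkey s (interior_subset hs)
        linarith
    have := hmono (Set.mem_Icc.2 ⟨le_refl 0, by norm_num⟩) ht ht.1
    simpa [q0] using this
  -- second step: ψ t = F (γ t) - (σ/4) ‖h‖² t² is monotone on [0,1]
  have hψ : F (γ 0) - σ / 4 * ‖h‖ ^ 2 * 0 ^ 2 ≤ F (γ 1) - σ / 4 * ‖h‖ ^ 2 * 1 ^ 2 := by
    apply aux_mono_01 (p := fun t => F (γ t) - σ / 4 * ‖h‖ ^ 2 * t ^ 2)
      (p' := fun t => fderiv ℝ F (γ t) h - σ / 2 * ‖h‖ ^ 2 * t)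
    · intro t
      have h1 : HasDerivAt (fun s : ℝ => σ / 4 * ‖h‖ ^ 2 * s ^ 2)
          (σ / 4 * ‖h‖ ^ 2 * (2 * t)) t := by
        have := ((hasDerivAt_pow 2 t).const_mul (σ / 4 * ‖h‖ ^ 2))
        simpa [pow_one] using this
      have h2 := (hg1 t).sub h1
      have heq : σ / 4 * ‖h‖ ^ 2 * (2 * t) = σ / 2 * ‖h‖ ^ 2 * t := by ring
      rwa [heq] at h2
    · exact hq
  have hγ0 : γ 0 = xstar := by simp [hγ]
  have hγ1 : γ 1 = x := by simp [hγ, hh]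
  rw [hγ0, hγ1] at hψ
  simp only [ge_iff_le]
  nlinarith [hψ]
end

section
/- Let E be a finite-dimensional real inner product space and F : E → ℝ a three-times continuously differentiable function whose third derivative satisfies ‖D³F(x)‖ ≤ L for all x, where L > 0. Suppose x* ∈ E satisfies DF(x*) = 0 and D²F(x*)(h, h) ≥ σ‖h‖² for all h ∈ E, where σ > 0. Then for every x with ‖x − x*‖ ≤ σ/(2L), one has ⟨x − x*, ∇F(x)⟩ ≥ (σ/2)‖x − x*‖². -/
open scoped RealInnerProductSpace

/-- If `F` is `C³` with third derivative bounded by `L`, has a critical point `x*`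
whose Hessian is `σ`-positive definite, then on the ball of radius `σ/(2L)` around
`x*` the gradient satisfies the correlation bound
`⟪x − x*, ∇F(x)⟫ ≥ (σ/2)‖x − x*‖²`. -/
theorem gradient_correlation_near_nondegenerate_min
    {E : Type*} [NormedAddCommGroup E] [InnerProductSpace ℝ E]
    [FiniteDimensional ℝ E]
    (F : E → ℝ) (hF : ContDiff ℝ 3 F)
    (L : ℝ) (hL : 0 < L)
    (hDF3 : ∀ x : E, ‖iteratedFDeriv ℝ 3 F x‖ ≤ L)
    (xstar : E) (hcrit : fderiv ℝ F xstar = 0)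
    (σ : ℝ) (hσ : 0 < σ)
    (hhess : ∀ h : E, σ * ‖h‖ ^ 2 ≤ iteratedFDeriv ℝ 2 F xstar ![h, h]) :
    ∀ x : E, ‖x - xstar‖ ≤ σ / (2 * L) →
      ⟪x - xstar, gradient F x⟫ ≥ (σ / 2) * ‖x - xstar‖ ^ 2 := by
  intro x hx
  set v : E := x - xstar with hv
  -- Lipschitz bound on the second derivative
  have hΦdiff : Differentiable ℝ (iteratedFDeriv ℝ 2 F) :=
    hF.differentiable_iteratedFDeriv (by norm_num)
  have hΦlip : ∀ y : E, ‖iteratedFDeriv ℝ 2 F y - iteratedFDeriv ℝ 2 F xstar‖ ≤ L * ‖y - xstar‖ := by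
    intro y
    refine Convex.norm_image_sub_le_of_norm_fderiv_le (s := Set.univ)
      (fun z _ => (hΦdiff z)) (fun z _ => ?_) convex_univ (Set.mem_univ _) (Set.mem_univ _)
    rw [norm_fderiv_iteratedFDeriv]
    exact hDF3 z
  -- pointwise lower bound on the Hessian quadratic form near xstar
  have key : ∀ y : E, ‖y - xstar‖ ≤ σ / (2 * L) →
      (σ / 2) * ‖v‖ ^ 2 ≤ iteratedFDeriv ℝ 2 F y ![v, v] := by
    intro y hy
    have h1 : ‖iteratedFDeriv ℝ 2 F y ![v, v] - iteratedFDeriv ℝ 2 F xstar ![v, v]‖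
        ≤ (L * ‖y - xstar‖) * (‖v‖ * ‖v‖) := by
      have := (iteratedFDeriv ℝ 2 F y - iteratedFDeriv ℝ 2 F xstar).le_opNorm ![v, v]
      simp only [ContinuousMultilinearMap.sub_apply] at this
      refine this.trans ?_
      have hprod : (∏ i : Fin 2, ‖(![v, v] : Fin 2 → E) i‖) = ‖v‖ * ‖v‖ := by
        simp [Fin.prod_univ_two]
      rw [hprod]
      exact mul_le_mul_of_nonneg_right (hΦlip y) (by positivity)
    have h2 : iteratedFDeriv ℝ 2 F xstar ![v, v] - (L * ‖y - xstar‖) * (‖v‖ * ‖v‖)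
        ≤ iteratedFDeriv ℝ 2 F y ![v, v] := by
      have := neg_le_of_abs_le (Real.norm_eq_abs _ ▸ h1)
      linarith
    have h3 : (L * ‖y - xstar‖) * (‖v‖ * ‖v‖) ≤ (σ / 2) * ‖v‖ ^ 2 := by
      have hLy : L * ‖y - xstar‖ ≤ σ / 2 := by
        have := mul_le_mul_of_nonneg_left hy hL.le
        calc L * ‖y - xstar‖ ≤ L * (σ / (2 * L)) := this
          _ = σ / 2 := by field_simp
      calc (L * ‖y - xstar‖) * (‖v‖ * ‖v‖) ≤ (σ / 2) * (‖v‖ * ‖v‖) :=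
            mul_le_mul_of_nonneg_right hLy (by positivity)
        _ = (σ / 2) * ‖v‖ ^ 2 := by ring
    have h4 := hhess v
    linarith
  -- the function g t = DF(xstar + t v)(v)
  set g : ℝ → ℝ := fun t => fderiv ℝ F (xstar + t • v) v with hg
  have hfd : ContDiff ℝ 2 (fderiv ℝ F) := hF.fderiv_right (by norm_num)
  have hgderiv : ∀ t : ℝ, HasDerivAt g (iteratedFDeriv ℝ 2 F (xstar + t • v) ![v, v]) t := by
    intro t
    have hγ : HasDerivAt (fun t : ℝ => xstar + t • v) v t := by
      simpa using ((hasDerivAt_id t).smul_const v).const_add xstar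
    have hφ : HasFDerivAt (fun y => fderiv ℝ F y v)
        ((ContinuousLinearMap.apply ℝ ℝ v).comp (fderiv ℝ (fderiv ℝ F) (xstar + t • v)))
        (xstar + t • v) := by
      exact (ContinuousLinearMap.apply ℝ ℝ v).hasFDerivAt.comp _
        ((hfd.differentiable (by norm_num)) (xstar + t • v)).hasFDerivAt
    have := hφ.comp_hasDerivAt t hγ
    have heq : (ContinuousLinearMap.apply ℝ ℝ v).comp
        (fderiv ℝ (fderiv ℝ F) (xstar + t • v)) v
        = iteratedFDeriv ℝ 2 F (xstar + t • v) ![v, v] := by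
      rw [iteratedFDeriv_two_apply]
      simp [ContinuousLinearMap.apply]
    rw [heq] at this
    exact this
  -- the endpoints
  have hx1 : xstar + (1 : ℝ) • v = x := by simp [hv]
  have hg0 : g 0 = 0 := by simp [hg, hcrit]
  have hx1' : xstar + v = x := by simp [hv]
  have hg1 : g 1 = fderiv ℝ F x v := by simp [hg, hx1']
  -- mean value theorem
  obtain ⟨c, hc, hceq⟩ := exists_hasDerivAt_eq_slope g
    (fun t => iteratedFDeriv ℝ 2 F (xstar + t • v) ![v, v]) one_pos
    (fun t _ => (hgderiv t).continuousAt.continuousWithinAt)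
    (fun t _ => hgderiv t)
  rw [hg0, hg1] at hceq
  have hcbound : (σ / 2) * ‖v‖ ^ 2 ≤ iteratedFDeriv ℝ 2 F (xstar + c • v) ![v, v] := by
    apply key
    have : ‖xstar + c • v - xstar‖ = c * ‖v‖ := by
      rw [add_sub_cancel_left, norm_smul, Real.norm_eq_abs, abs_of_pos hc.1]
    rw [this]
    calc c * ‖v‖ ≤ 1 * ‖v‖ := mul_le_mul_of_nonneg_right hc.2.le (norm_nonneg v)
      _ = ‖v‖ := one_mul _
      _ ≤ σ / (2 * L) := hx
  have hfx : fderiv ℝ F x v ≥ (σ / 2) * ‖v‖ ^ 2 := by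
    rw [hceq] at hcbound
    simpa using hcbound
  -- relate to the gradient
  have hgrad : ⟪v, gradient F x⟫ = fderiv ℝ F x v := by
    rw [real_inner_comm]
    exact InnerProductSpace.toDual_symm_apply
  rw [hgrad]
  exact hfx
end
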